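/- Let G' be obtained from full-column-rank G by appending a column, and suppose the NLS solution with the sign constraint dropped on the last coordinate yields value ỹ_{k+1} < 0 for that coordinate. Then the constrained minimum of ‖[G g]·(y; y_{k+1}) − b‖ over y ≥ 0, y_{k+1} ≥ 0 is attained with y_{k+1} = 0. Precisely: if the minimizer (ỹ, ỹ_{k+1}) of ‖G y + g y_{k+1} − b‖ over {y ≥ 0, y_{k+1} ∈ ℝ} has ỹ_{k+1} < 0, then the minimizer over {y ≥ 0, y_{k+1} ≥ 0} has last coordinate equal to 0. -/

import Mathlib

open scoped RealInnerProductSpace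

/-- If the minimizer of ‖G y + g t − b‖ over {y ≥ 0, t ∈ ℝ} has negative last
coordinate, then the minimizer over {y ≥ 0, t ≥ 0} has last coordinate 0. -/
theorem stmt17 {m k : ℕ} (G : Fin k → EuclideanSpace ℝ (Fin m))
    (g b : EuclideanSpace ℝ (Fin m))
    (hGg : LinearIndependent ℝ (Fin.snoc G g : Fin (k + 1) → EuclideanSpace ℝ (Fin m)))
    (ytilde : Fin k → ℝ) (ttilde : ℝ)
    (hy_nonneg : ∀ i, 0 ≤ ytilde i)
    (hy_min : ∀ (z : Fin k → ℝ) (u : ℝ), (∀ i, 0 ≤ z i) →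
        ‖(∑ i, ytilde i • G i) + ttilde • g - b‖ ≤ ‖(∑ i, z i • G i) + u • g - b‖)
    (ht_neg : ttilde < 0) :
    ∀ (y : Fin k → ℝ) (t : ℝ), (∀ i, 0 ≤ y i) → 0 ≤ t →
      (∀ (z : Fin k → ℝ) (u : ℝ), (∀ i, 0 ≤ z i) → 0 ≤ u →
        ‖(∑ i, y i • G i) + t • g - b‖ ≤ ‖(∑ i, z i • G i) + u • g - b‖) →
      t = 0 := by
  intro y t hy ht hmin
  by_contra hne
  have ht' : 0 < t := lt_of_le_of_ne ht (Ne.symm hne)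
  set l : ℝ := t / (t - ttilde) with hl_def
  have hden : 0 < t - ttilde := by linarith
  have hl0 : 0 < l := div_pos ht' hden
  have hl1 : l < 1 := by
    rw [hl_def, div_lt_one hden]; linarith
  set z : Fin k → ℝ := fun i => (1 - l) * y i + l * ytilde i with hz_def
  have hz : ∀ i, 0 ≤ z i := fun i =>
    add_nonneg (mul_nonneg (by linarith) (hy i)) (mul_nonneg hl0.le (hy_nonneg i))
  set v : EuclideanSpace ℝ (Fin m) := (∑ i, y i • G i) + t • g - b with hv_def
  set w : EuclideanSpace ℝ (Fin m) := (∑ i, ytilde i • G i) + ttilde • g - b with hw_def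
  have hu0 : (1 - l) * t + l * ttilde = 0 := by
    have h := div_mul_cancel₀ t (ne_of_gt hden)
    rw [← hl_def] at h
    linear_combination -h
  have hsum : (∑ i, z i • G i) = (1 - l) • (∑ i, y i • G i) + l • (∑ i, ytilde i • G i) := by
    rw [Finset.smul_sum, Finset.smul_sum, ← Finset.sum_add_distrib]
    exact Finset.sum_congr rfl (fun i _ => by rw [hz_def]; simp [add_smul, smul_smul])
  have hcomb : (∑ i, z i • G i) + (0 : ℝ) • g - b = (1 - l) • v + l • w := by
    rw [hsum, ← hu0, hv_def, hw_def]
    module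
  -- inequalities
  have h1 : ‖w‖ ≤ ‖v‖ := hy_min y t hy
  clear_value l z
  have h2 : ‖v‖ ≤ ‖(1 - l) • v + l • w‖ := by
    have := hmin z 0 hz le_rfl
    rwa [hcomb] at this
  have h3 : ‖(1 - l) • v + l • w‖ ≤ (1 - l) * ‖v‖ + l * ‖w‖ := by
    calc ‖(1 - l) • v + l • w‖ ≤ ‖(1 - l) • v‖ + ‖l • w‖ := norm_add_le _ _
    _ = (1 - l) * ‖v‖ + l * ‖w‖ := by
        rw [norm_smul, norm_smul, Real.norm_of_nonneg (by linarith), Real.norm_of_nonneg hl0.le]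
  have hnorm_eq : ‖w‖ = ‖v‖ := by nlinarith
  have hmid : ‖(1 - l) • v + l • w‖ = ‖v‖ := by nlinarith
  -- equality in the triangle inequality forces v = w
  clear_value v w
  have hsq : ‖(1 - l) • v + l • w‖ ^ 2 =
      ‖(1 - l) • v‖ ^ 2 + 2 * ⟪(1 - l) • v, l • w⟫ + ‖l • w‖ ^ 2 :=
    norm_add_sq_real _ _
  rw [hmid, norm_smul, norm_smul, Real.norm_of_nonneg (by linarith : (0:ℝ) ≤ 1 - l),
    Real.norm_of_nonneg hl0.le, real_inner_smul_left, real_inner_smul_right, hnorm_eq] at hsq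
  have hfac : 2 * ((1 - l) * l) * (⟪v, w⟫ - ‖v‖ ^ 2) = 0 := by linear_combination -hsq
  have hpos : (0:ℝ) < 2 * ((1 - l) * l) := mul_pos two_pos (mul_pos (by linarith) hl0)
  have hinner : ⟪v, w⟫ = ‖v‖ ^ 2 :=
    sub_eq_zero.mp ((mul_eq_zero.mp hfac).resolve_left (ne_of_gt hpos))
  have hvw : v = w := by
    have hsub : ‖v - w‖ ^ 2 = ‖v‖ ^ 2 - 2 * ⟪v, w⟫ + ‖w‖ ^ 2 := norm_sub_sq_real v w
    rw [hinner, hnorm_eq] at hsub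
    have : ‖v - w‖ ^ 2 = 0 := by linear_combination hsub
    have := pow_eq_zero_iff (n := 2) (by norm_num) |>.mp this
    rw [norm_eq_zero, sub_eq_zero] at this
    exact this
  -- linear independence: extract last coefficient
  have heq : (∑ i, y i • G i) + t • g = (∑ i, ytilde i • G i) + ttilde • g := by
    have := hvw
    rw [hv_def, hw_def] at this
    exact sub_left_inj.mp this
  set c : Fin (k + 1) → ℝ := Fin.snoc (fun i => y i - ytilde i) (t - ttilde) with hc_def
  have hzero : ∑ i, c i • (Fin.snoc G g : Fin (k + 1) → EuclideanSpace ℝ (Fin m)) i = 0 := by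
    rw [Fin.sum_univ_castSucc]
    simp only [hc_def, Fin.snoc_castSucc, Fin.snoc_last]
    have : ∑ i : Fin k, (y i - ytilde i) • G i
        = (∑ i, y i • G i) - (∑ i, ytilde i • G i) := by
      rw [← Finset.sum_sub_distrib]
      exact Finset.sum_congr rfl (fun i _ => sub_smul _ _ _)
    rw [this, sub_smul]
    have h0 : (∑ i, y i • G i) + t • g - ((∑ i, ytilde i • G i) + ttilde • g) = 0 :=
      sub_eq_zero_of_eq heq
    rw [← h0]; abel
  have hlast := (Fintype.linearIndependent_iff.mp hGg c hzero) (Fin.last k)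
  simp only [hc_def, Fin.snoc_last] at hlast
  linarith
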